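/- Let X be a reflexive smooth complex Banach space and T ∈ B(X) a self-adjoint operator. Then μ(Tⁿ) = μ(T)ⁿ for all natural numbers n, where μ denotes the minimum modulus. -/

import Mathlib

/-- Self-adjointness on a smooth Banach space: `T' ∘ J = J ∘ T`. -/
def IsSelfAdj {X : Type*} [NormedAddCommGroup X] [NormedSpace ℂ X]
    (J : X → (X →L[ℂ] ℂ)) (T : X →L[ℂ] X) : Prop :=
  ∀ x : X, J (T x) = (J x).comp T

/-- The minimum modulus μ(T) = inf{‖Tx‖ : ‖x‖ = 1}. -/
noncomputable def minMod {X : Type*} [NormedAddCommGroup X] [NormedSpace ℂ X]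
    (T : X →L[ℂ] X) : ℝ :=
  sInf {r : ℝ | ∃ x : X, ‖x‖ = 1 ∧ r = ‖T x‖}

section Aux

variable {X : Type*} [NormedAddCommGroup X] [NormedSpace ℂ X]

lemma minMod_bddBelow (T : X →L[ℂ] X) :
    BddBelow {r : ℝ | ∃ x : X, ‖x‖ = 1 ∧ r = ‖T x‖} :=
  ⟨0, by rintro r ⟨x, hx, rfl⟩; exact norm_nonneg _⟩

lemma minMod_nonneg (T : X →L[ℂ] X) : 0 ≤ minMod T :=
  Real.sInf_nonneg (by rintro r ⟨x, hx, rfl⟩; exact norm_nonneg _)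

lemma minMod_le (T : X →L[ℂ] X) {x : X} (hx : ‖x‖ = 1) : minMod T ≤ ‖T x‖ :=
  csInf_le (minMod_bddBelow T) ⟨x, hx, rfl⟩

lemma minMod_mul_le (T : X →L[ℂ] X) (x : X) : minMod T * ‖x‖ ≤ ‖T x‖ := by
  rcases eq_or_ne x 0 with rfl | hx
  · simp
  · have hxn : (0:ℝ) < ‖x‖ := norm_pos_iff.mpr hx
    have hu : ‖((‖x‖⁻¹ : ℝ) : ℂ) • x‖ = 1 := by
      rw [norm_smul, Complex.norm_real, Real.norm_eq_abs, abs_of_pos (inv_pos.mpr hxn),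
        inv_mul_cancel₀ hxn.ne']
    have h1 : minMod T ≤ ‖T (((‖x‖⁻¹ : ℝ) : ℂ) • x)‖ := minMod_le T hu
    rw [map_smul, norm_smul, Complex.norm_real, Real.norm_eq_abs,
      abs_of_pos (inv_pos.mpr hxn)] at h1
    have h2 := mul_le_mul_of_nonneg_right h1 (norm_nonneg x)
    calc minMod T * ‖x‖ ≤ ‖x‖⁻¹ * ‖T x‖ * ‖x‖ := h2
      _ = ‖T x‖ * (‖x‖⁻¹ * ‖x‖) := by ring
      _ = ‖T x‖ := by rw [inv_mul_cancel₀ hxn.ne', mul_one]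

 lemma minMod_pow_mul_le (T : X →L[ℂ] X) :
    ∀ n : ℕ, ∀ x : X, (minMod T) ^ n * ‖x‖ ≤ ‖(T ^ n) x‖ := by
  intro n
  induction n with
  | zero => intro x; simp
  | succ n ih =>
    intro x
    have h1 : (T ^ (n+1)) x = (T ^ n) (T x) := by
      rw [pow_succ]; rfl
    have h2 : (minMod T) ^ n * ‖T x‖ ≤ ‖(T ^ n) (T x)‖ := ih (T x)
    have h3 : (minMod T) ^ n * (minMod T * ‖x‖) ≤ (minMod T) ^ n * ‖T x‖ :=
      mul_le_mul_of_nonneg_left (minMod_mul_le T x) (pow_nonneg (minMod_nonneg T) n)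
    rw [h1]
    calc (minMod T) ^ (n+1) * ‖x‖ = (minMod T) ^ n * (minMod T * ‖x‖) := by ring
      _ ≤ (minMod T) ^ n * ‖T x‖ := h3
      _ ≤ ‖(T ^ n) (T x)‖ := h2

variable (J : X → (X →L[ℂ] ℂ))

lemma isSelfAdj_pow {T : X →L[ℂ] X} (hT : IsSelfAdj J T) :
    ∀ n : ℕ, IsSelfAdj J (T ^ n) := by
  intro n
  induction n with
  | zero =>
    intro x
    ext y
    simp
  | succ n ih =>
    intro x
    ext y
    have h1 : (T ^ (n+1)) x = (T ^ n) (T x) := by rw [pow_succ]; rfl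
    have h2 : (T ^ (n+1)) y = T ((T ^ n) y) := by rw [pow_succ']; rfl
    rw [ContinuousLinearMap.comp_apply, h1, h2]
    rw [ContinuousLinearMap.ext_iff.mp (ih (T x)) y, ContinuousLinearMap.comp_apply]
    rw [ContinuousLinearMap.ext_iff.mp (hT x) ((T ^ n) y), ContinuousLinearMap.comp_apply]

lemma selfAdj_norm_sq (hJnorm : ∀ x : X, ‖J x‖ = ‖x‖)
    (hJx : ∀ x : X, J x x = (‖x‖ : ℂ) ^ 2)
    {T : X →L[ℂ] X} (hT : IsSelfAdj J T) (x : X) :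
    ‖T x‖ ^ 2 ≤ ‖x‖ * ‖T (T x)‖ := by
  have h1 : ((‖T x‖ : ℂ)) ^ 2 = J x (T (T x)) := by
    rw [← hJx (T x), ContinuousLinearMap.ext_iff.mp (hT x) (T x),
      ContinuousLinearMap.comp_apply]
  have h2 : ‖((‖T x‖ : ℂ)) ^ 2‖ = ‖T x‖ ^ 2 := by
    rw [norm_pow, Complex.norm_real, Real.norm_eq_abs, abs_norm]
  have h3 : ‖J x (T (T x))‖ ≤ ‖J x‖ * ‖T (T x)‖ := (J x).le_opNorm _
  rw [hJnorm x] at h3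
  rw [← h2, h1]
  exact h3

lemma selfAdj_opNorm_sq (hJnorm : ∀ x : X, ‖J x‖ = ‖x‖)
    (hJx : ∀ x : X, J x x = (‖x‖ : ℂ) ^ 2)
    {T : X →L[ℂ] X} (hT : IsSelfAdj J T) :
    ‖T‖ ^ 2 ≤ ‖T * T‖ := by
  have key : ∀ x : X, ‖T x‖ ≤ Real.sqrt ‖T * T‖ * ‖x‖ := by
    intro x
    have h1 : ‖T x‖ ^ 2 ≤ ‖x‖ * ‖T (T x)‖ := selfAdj_norm_sq J hJnorm hJx hT x
    have h2 : ‖T (T x)‖ = ‖(T * T) x‖ := rfl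
    have h3 : ‖(T * T) x‖ ≤ ‖T * T‖ * ‖x‖ := (T * T).le_opNorm x
    have h4 : ‖T x‖ ^ 2 ≤ (Real.sqrt ‖T * T‖ * ‖x‖) ^ 2 := by
      rw [mul_pow, Real.sq_sqrt (norm_nonneg _)]
      calc ‖T x‖ ^ 2 ≤ ‖x‖ * ‖(T * T) x‖ := by rw [← h2]; exact h1
        _ ≤ ‖x‖ * (‖T * T‖ * ‖x‖) := mul_le_mul_of_nonneg_left h3 (norm_nonneg x)
        _ = ‖T * T‖ * ‖x‖ ^ 2 := by ring
    have h5 : (0:ℝ) ≤ Real.sqrt ‖T * T‖ * ‖x‖ := by positivity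
    nlinarith [norm_nonneg (T x)]
  have h6 : ‖T‖ ≤ Real.sqrt ‖T * T‖ := T.opNorm_le_bound (Real.sqrt_nonneg _) key
  calc ‖T‖ ^ 2 ≤ (Real.sqrt ‖T * T‖) ^ 2 := by
        exact pow_le_pow_left₀ (norm_nonneg T) h6 2
    _ = ‖T * T‖ := Real.sq_sqrt (norm_nonneg _)

lemma selfAdj_dyadic_norm (hJnorm : ∀ x : X, ‖J x‖ = ‖x‖)
    (hJx : ∀ x : X, J x x = (‖x‖ : ℂ) ^ 2)
    {T : X →L[ℂ] X} (hT : IsSelfAdj J T) :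
    ∀ k : ℕ, ‖T ^ (2 ^ k)‖ = ‖T‖ ^ (2 ^ k) := by
  intro k
  induction k with
  | zero => simp
  | succ k ih =>
    have hsa : IsSelfAdj J (T ^ (2 ^ k)) := isSelfAdj_pow J hT (2 ^ k)
    have h1 : ‖T ^ (2 ^ k)‖ ^ 2 ≤ ‖(T ^ (2 ^ k)) * (T ^ (2 ^ k))‖ :=
      selfAdj_opNorm_sq J hJnorm hJx hsa
    have h2 : T ^ (2 ^ (k+1)) = (T ^ (2 ^ k)) * (T ^ (2 ^ k)) := by
      rw [← pow_add]
      congr 1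
      ring
    have h3 : ‖T ^ (2 ^ (k+1))‖ ≤ ‖T‖ ^ (2 ^ (k+1)) :=
      norm_pow_le' T (Nat.pow_pos (by norm_num))
    have h4 : ‖T‖ ^ (2 ^ (k+1)) ≤ ‖T ^ (2 ^ (k+1))‖ := by
      rw [h2]
      calc ‖T‖ ^ (2 ^ (k+1)) = (‖T‖ ^ (2 ^ k)) ^ 2 := by
            rw [← pow_mul]
            congr 1
        _ = ‖T ^ (2 ^ k)‖ ^ 2 := by rw [ih]
        _ ≤ ‖(T ^ (2 ^ k)) * (T ^ (2 ^ k))‖ := h1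
    exact le_antisymm h3 h4

lemma selfAdj_norm_pow (hJnorm : ∀ x : X, ‖J x‖ = ‖x‖)
    (hJx : ∀ x : X, J x x = (‖x‖ : ℂ) ^ 2)
    {T : X →L[ℂ] X} (hT : IsSelfAdj J T) (n : ℕ) (hn : 1 ≤ n) :
    ‖T‖ ^ n ≤ ‖T ^ n‖ := by
  by_cases hT0 : ‖T‖ = 0
  · have : T = 0 := norm_eq_zero.mp hT0
    subst this
    rw [hT0, zero_pow (by omega : n ≠ 0), zero_pow (by omega : n ≠ 0)]
    simp
  · have hpos : 0 < ‖T‖ := (norm_nonneg T).lt_of_ne (Ne.symm hT0)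
    have hk : n < 2 ^ n := Nat.lt_two_pow_self
    have hd : ‖T ^ (2 ^ n)‖ = ‖T‖ ^ (2 ^ n) := selfAdj_dyadic_norm J hJnorm hJx hT n
    have key : ‖T‖ ^ (2 ^ n) ≤ ‖T ^ n‖ * ‖T‖ ^ (2 ^ n - n) := by
      calc ‖T‖ ^ (2 ^ n) = ‖T ^ (2 ^ n)‖ := hd.symm
        _ = ‖T ^ n * T ^ (2 ^ n - n)‖ := by
            rw [← pow_add, Nat.add_sub_cancel' hk.le]
        _ ≤ ‖T ^ n‖ * ‖T ^ (2 ^ n - n)‖ := norm_mul_le _ _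
        _ ≤ ‖T ^ n‖ * ‖T‖ ^ (2 ^ n - n) := by
            apply mul_le_mul_of_nonneg_left _ (norm_nonneg _)
            exact norm_pow_le' T (by omega)
    have hsplit : ‖T‖ ^ (2 ^ n) = ‖T‖ ^ n * ‖T‖ ^ (2 ^ n - n) := by
      rw [← pow_add, Nat.add_sub_cancel' hk.le]
    rw [hsplit] at key
    exact le_of_mul_le_mul_right key (pow_pos hpos _)

end Aux

/-- For a self-adjoint operator T on a reflexive smooth complex
Banach space, μ(Tⁿ) = μ(T)ⁿ for all natural numbers n. -/
theorem minMod_pow_eq_pow_minMod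
    {X : Type*} [NormedAddCommGroup X] [NormedSpace ℂ X] [CompleteSpace X]
    (J : X → (X →L[ℂ] ℂ))
    (hJnorm : ∀ x : X, ‖J x‖ = ‖x‖)
    (hJx : ∀ x : X, J x x = (‖x‖ : ℂ) ^ 2)
    (hJsurj : Function.Surjective J)
    (T : X →L[ℂ] X) (hT : IsSelfAdj J T) :
    ∀ n : ℕ, 1 ≤ n → minMod (T ^ n) = (minMod T) ^ n := by
  intro n hn
  by_cases hX : ∃ u : X, ‖u‖ = 1
  swap
  · -- trivial space: all the sets are empty
    have hemp : ∀ S : X →L[ℂ] X, {r : ℝ | ∃ x : X, ‖x‖ = 1 ∧ r = ‖S x‖} = ∅ := by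
      intro S
      apply Set.eq_empty_iff_forall_notMem.mpr
      rintro r ⟨x, hx, -⟩
      exact hX ⟨x, hx⟩
    have h1 : minMod (T ^ n) = 0 := by unfold minMod; rw [hemp, Real.sInf_empty]
    have h2 : minMod T = 0 := by unfold minMod; rw [hemp, Real.sInf_empty]
    rw [h1, h2, zero_pow (by omega : n ≠ 0)]
  obtain ⟨u, hu⟩ := hX
  have hne : {r : ℝ | ∃ x : X, ‖x‖ = 1 ∧ r = ‖(T ^ n) x‖}.Nonempty :=
    ⟨‖(T ^ n) u‖, u, hu, rfl⟩
  have hneT : {r : ℝ | ∃ x : X, ‖x‖ = 1 ∧ r = ‖T x‖}.Nonempty :=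
    ⟨‖T u‖, u, hu, rfl⟩
  have hlow : (minMod T) ^ n ≤ minMod (T ^ n) := by
    apply le_csInf hne
    rintro r ⟨x, hx, rfl⟩
    have := minMod_pow_mul_le T n x
    rwa [hx, mul_one] at this
  rcases (minMod_nonneg T).lt_or_eq with hpos | hzero
  swap
  · -- minMod T = 0
    rw [← hzero, zero_pow (by omega : n ≠ 0)]
    obtain ⟨m, rfl⟩ : ∃ m, n = m + 1 := ⟨n - 1, by omega⟩
    refine le_antisymm ?_ (minMod_nonneg _)
    by_contra h
    push_neg at h
    set c := minMod (T ^ (m+1)) with hc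
    set C := ‖T ^ m‖ with hC
    have hCpos : (0:ℝ) < C + 1 := by positivity
    have hδ : 0 < c / (C + 1) := by positivity
    have hlt : minMod T < c / (C + 1) := by rw [← hzero]; exact hδ
    obtain ⟨r, hrmem, hr⟩ := exists_lt_of_csInf_lt hneT hlt
    obtain ⟨x, hx1, rfl⟩ := hrmem
    have h1 : c ≤ ‖(T ^ (m+1)) x‖ := minMod_le _ hx1
    have h2 : (T ^ (m+1)) x = (T ^ m) (T x) := by rw [pow_succ]; rfl
    have h3 : ‖(T ^ m) (T x)‖ ≤ C * ‖T x‖ := (T ^ m).le_opNorm _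
    have h4 : (C + 1) * ‖T x‖ < c := by
      rw [mul_comm]
      exact (lt_div_iff₀ hCpos).mp hr
    have h5 : c ≤ C * ‖T x‖ := by rw [h2] at h1; linarith
    nlinarith [norm_nonneg (T x)]
  · -- minMod T > 0 : T is invertible
    set μ := minMod T with hμ
    have hbdd : ∀ x : X, μ * ‖x‖ ≤ ‖T x‖ := minMod_mul_le T
    have hker : LinearMap.ker (T : X →ₗ[ℂ] X) = ⊥ := by
      ext x
      simp only [LinearMap.mem_ker, Submodule.mem_bot]
      constructor
      · intro hx
        change T x = 0 at hx
        have h2 := hbdd x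
        rw [hx, norm_zero] at h2
        have h3 : ‖x‖ ≤ 0 := by nlinarith
        exact norm_le_zero_iff.mp h3
      · intro hx; rw [hx, map_zero]
    have hanti : AntilipschitzWith (⟨μ⁻¹, inv_nonneg.mpr (minMod_nonneg T)⟩ : NNReal) T := by
      apply T.antilipschitz_of_bound
      intro x
      have h1 := hbdd x
      have : ‖x‖ = μ⁻¹ * (μ * ‖x‖) := by
        rw [← mul_assoc, inv_mul_cancel₀ hpos.ne', one_mul]
      rw [this]
      exact mul_le_mul_of_nonneg_left h1 (inv_nonneg.mpr hpos.le)
    have hclosed : IsClosed (Set.range T) :=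
      hanti.isClosed_range T.uniformContinuous
    have hrange : LinearMap.range (T : X →ₗ[ℂ] X) = ⊤ := by
      by_contra hneq
      obtain ⟨y, hy⟩ : ∃ y : X, y ∉ LinearMap.range (T : X →ₗ[ℂ] X) := by
        by_contra h
        push_neg at h
        exact hneq (eq_top_iff.mpr fun z _ => h z)
      have hconv : Convex ℝ ((LinearMap.range (T : X →ₗ[ℂ] X) : Submodule ℂ X) : Set X) :=
        ((LinearMap.range (T : X →ₗ[ℂ] X)).restrictScalars ℝ).convex
      have hcl : IsClosed ((LinearMap.range (T : X →ₗ[ℂ] X) : Submodule ℂ X) : Set X) := by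
        have : ((LinearMap.range (T : X →ₗ[ℂ] X) : Submodule ℂ X) : Set X) = Set.range T := by
          ext z; simp [LinearMap.mem_range]
        rw [this]; exact hclosed
      obtain ⟨f, v, hfy, hfb⟩ :=
        RCLike.geometric_hahn_banach_point_closed (𝕜 := ℂ) hconv hcl hy
      have hvan : ∀ z : X, f (T z) = 0 := by
        intro z
        by_contra hfz
        have hmem : (((v : ℂ) - 1) / f (T z)) • (T z)
            ∈ ((LinearMap.range (T : X →ₗ[ℂ] X) : Submodule ℂ X) : Set X) := by
          refine ⟨(((v : ℂ) - 1) / f (T z)) • z, ?_⟩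
          rw [map_smul]; rfl
        have h1 := hfb _ hmem
        rw [map_smul, smul_eq_mul, div_mul_cancel₀ _ hfz] at h1
        have h2 : RCLike.re ((v : ℂ) - 1) = v - 1 := by
          simp [RCLike.re_to_complex]
        rw [h2] at h1
        linarith
      obtain ⟨w, hw⟩ := hJsurj f
      have hcomp : J (T w) = 0 := by
        rw [hT w, hw]
        ext z
        exact hvan z
      have hTw : ‖T w‖ = 0 := by rw [← hJnorm (T w), hcomp, norm_zero]
      have hw0 : w = 0 := by
        have h2 := hbdd w
        rw [hTw] at h2
        have : ‖w‖ ≤ 0 := by nlinarith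
        exact norm_le_zero_iff.mp this
      have hf0 : f = 0 := by
        rw [← hw, hw0]
        have : ‖J (0 : X)‖ = 0 := by rw [hJnorm]; simp
        exact norm_eq_zero.mp this
      have h0mem : (0:X) ∈ ((LinearMap.range (T : X →ₗ[ℂ] X) : Submodule ℂ X) : Set X) :=
        ⟨0, map_zero T⟩
      have h1 := hfb 0 h0mem
      rw [hf0] at h1 hfy
      simp at h1 hfy
      linarith
    set e := ContinuousLinearEquiv.ofBijective T hker hrange with he
    set S : X →L[ℂ] X := (e.symm : X →L[ℂ] X) with hS
    have hTS : ∀ z : X, T (S z) = z := by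
      intro z
      have h1 : T (e.symm z) = e (e.symm z) := by
        rw [ContinuousLinearEquiv.coeFn_ofBijective]
      rw [hS]
      show T (e.symm z) = z
      rw [h1, e.apply_symm_apply]
    have hST : ∀ z : X, S (T z) = z := by
      intro z
      rw [hS]
      show e.symm (T z) = z
      have h1 : T z = e z := by rw [ContinuousLinearEquiv.coeFn_ofBijective]
      rw [h1, e.symm_apply_apply]
    have hTSn : ∀ m : ℕ, ∀ z : X, (T ^ m) ((S ^ m) z) = z := by
      intro m
      induction m with
      | zero => intro z; simp
      | succ m ih =>
        intro z
        have h1 : (T ^ (m+1)) ((S ^ (m+1)) z) = (T ^ m) (T (S ((S ^ m) z))) := by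
          rw [pow_succ T, pow_succ' S]; rfl
        rw [h1, hTS, ih]
    -- S is self-adjoint
    have hSadj : IsSelfAdj J S := by
      intro x
      have h := hT (S x)
      rw [hTS x] at h
      ext y
      rw [ContinuousLinearMap.comp_apply]
      conv_rhs => rw [h]
      rw [ContinuousLinearMap.comp_apply, hTS y]
    -- positivity facts
    have hSu : S u ≠ 0 := by
      intro h0
      have : T (S u) = u := hTS u
      rw [h0, map_zero] at this
      rw [← this, norm_zero] at hu
      norm_num at hu
    have hSpos : 0 < ‖S‖ := by
      have h1 : 0 < ‖S u‖ := norm_pos_iff.mpr hSu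
      have h2 : ‖S u‖ ≤ ‖S‖ * ‖u‖ := S.le_opNorm u
      rw [hu, mul_one] at h2
      linarith
    have hμn_pos : 0 < minMod (T ^ n) := lt_of_lt_of_le (pow_pos hpos n) hlow
    -- ‖S^n‖ ≤ (minMod (T^n))⁻¹
    have hSn_le : ‖S ^ n‖ ≤ (minMod (T ^ n))⁻¹ := by
      apply ContinuousLinearMap.opNorm_le_bound _ (inv_nonneg.mpr hμn_pos.le)
      intro y
      have h1 : minMod (T ^ n) * ‖(S ^ n) y‖ ≤ ‖(T ^ n) ((S ^ n) y)‖ :=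
        minMod_mul_le (T ^ n) ((S ^ n) y)
      rw [hTSn n y] at h1
      have : ‖(S ^ n) y‖ = (minMod (T ^ n))⁻¹ * (minMod (T ^ n) * ‖(S ^ n) y‖) := by
        rw [← mul_assoc, inv_mul_cancel₀ hμn_pos.ne', one_mul]
      rw [this]
      exact mul_le_mul_of_nonneg_left h1 (inv_nonneg.mpr hμn_pos.le)
    have hSn_ge : ‖S‖ ^ n ≤ ‖S ^ n‖ := selfAdj_norm_pow J hJnorm hJx hSadj n hn
    have hSn_pos : 0 < ‖S ^ n‖ := lt_of_lt_of_le (pow_pos hSpos n) hSn_ge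
    -- minMod (T^n) ≤ ‖S^n‖⁻¹
    have hup1 : minMod (T ^ n) ≤ ‖S ^ n‖⁻¹ := by
      have h1 : (minMod (T ^ n))⁻¹⁻¹ ≤ ‖S ^ n‖⁻¹ :=
        inv_anti₀ hSn_pos hSn_le
      rwa [inv_inv] at h1
    have hup2 : ‖S ^ n‖⁻¹ ≤ (‖S‖ ^ n)⁻¹ :=
      inv_anti₀ (pow_pos hSpos n) hSn_ge
    -- ‖S‖⁻¹ ≤ μ
    have hinvS_le : ‖S‖⁻¹ ≤ μ := by
      apply le_csInf hneT
      rintro r ⟨x, hx, rfl⟩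
      have h1 : ‖x‖ ≤ ‖S‖ * ‖T x‖ := by
        have := S.le_opNorm (T x)
        rwa [hST x] at this
      rw [hx] at h1
      have h2 : ‖S‖⁻¹ * 1 ≤ ‖S‖⁻¹ * (‖S‖ * ‖T x‖) :=
        mul_le_mul_of_nonneg_left h1 (inv_nonneg.mpr hSpos.le)
      rwa [mul_one, ← mul_assoc, inv_mul_cancel₀ hSpos.ne', one_mul] at h2
    have hup3 : (‖S‖ ^ n)⁻¹ ≤ μ ^ n := by
      rw [← inv_pow]
      exact pow_le_pow_left₀ (inv_nonneg.mpr hSpos.le) hinvS_le n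
    exact le_antisymm (hup1.trans (hup2.trans hup3)) hlow
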